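/- The sequence of functions g_n(z,λ) := 2^{-n} log⁺|f_λⁿ(z)| converges uniformly on compact subsets of ℂ² to a continuous function G : ℂ² → ℝ. -/

import Mathlib

/-- `log⁺ t = log (max t 1)`. -/
noncomputable def logPlus (t : ℝ) : ℝ := Real.log (max t 1)

open Filter Metric Finset

noncomputable def gg (n : ℕ) (p : ℂ × ℂ) : ℝ :=
  (2 : ℝ)⁻¹ ^ n * logPlus (‖(fun z => z ^ 2 + p.2)^[n] p.1‖)

noncomputable def dd (n : ℕ) (p : ℂ × ℂ) : ℝ := gg (n + 1) p - gg n p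

lemma key (lam w : ℂ) :
    |logPlus (‖w ^ 2 + lam‖) - 2 * logPlus (‖w‖)| ≤
      Real.log (2 * (‖lam‖ + 1)) := by
  set L := ‖lam‖ with hLdef
  have hL : 0 ≤ L := norm_nonneg _
  set M := max (‖w‖) 1 with hMdef
  have hM1 : (1 : ℝ) ≤ M := le_max_right _ _
  have hwM : ‖w‖ ≤ M := le_max_left _ _
  set A := ‖w ^ 2 + lam‖ with hAdef
  set N := max A 1 with hNdef
  have hN1 : (1 : ℝ) ≤ N := le_max_right _ _
  have h2L : (1 : ℝ) ≤ 2 * (L + 1) := by nlinarith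
  have hub : N ≤ 2 * (L + 1) * M ^ 2 := by
    have hA : A ≤ M ^ 2 + L := by
      have h1 : A ≤ ‖w‖ ^ 2 + L := by
        rw [hAdef, hLdef]
        calc ‖w ^ 2 + lam‖ ≤ ‖w ^ 2‖ + ‖lam‖ :=
              norm_add_le (w ^ 2) lam
          _ = ‖w‖ ^ 2 + ‖lam‖ := by rw [norm_pow]
      have h2 : ‖w‖ ^ 2 ≤ M ^ 2 :=
        pow_le_pow_left₀ (norm_nonneg _) hwM 2
      linarith
    have hM2 : (1 : ℝ) ≤ M ^ 2 := one_le_pow₀ hM1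
    have : M ^ 2 + L ≤ 2 * (L + 1) * M ^ 2 := by nlinarith
    exact max_le (by linarith) (by nlinarith)
  have hlb : M ^ 2 ≤ 2 * (L + 1) * N := by
    by_cases h : M ^ 2 ≤ 2 * (L + 1)
    · nlinarith
    · push_neg at h
      have hMw : M = ‖w‖ := by
        rcases max_cases (‖w‖) 1 with ⟨h1, _⟩ | ⟨h1, h2⟩
        · exact h1
        · exfalso; rw [hMdef] at h; rw [← hMdef] at h1; nlinarith
      have hA' : M ^ 2 - L ≤ A := by
        have h1 : ‖w ^ 2‖ ≤ A + L := by
          rw [hAdef, hLdef]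
          calc ‖w ^ 2‖ = ‖w ^ 2 + lam + -lam‖ := by ring_nf
            _ ≤ ‖w ^ 2 + lam‖ + ‖-lam‖ :=
                norm_add_le _ _
            _ = ‖w ^ 2 + lam‖ + ‖lam‖ := by rw [norm_neg]
        have h2 : ‖w ^ 2‖ = M ^ 2 := by rw [norm_pow, hMw]
        linarith
      have hAN : A ≤ N := le_max_left _ _
      nlinarith
  have hMpos : (0 : ℝ) < M := lt_of_lt_of_le zero_lt_one hM1
  have hNpos : (0 : ℝ) < N := lt_of_lt_of_le zero_lt_one hN1
  have hCpos : (0 : ℝ) < 2 * (L + 1) := by nlinarith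
  have e1 : logPlus A = Real.log N := rfl
  have e2 : logPlus (‖w‖) = Real.log M := rfl
  have e3 : (2 : ℝ) * Real.log M = Real.log (M ^ 2) := by
    rw [Real.log_pow]; push_cast; ring
  rw [abs_le]
  constructor
  · have h1 : Real.log (M ^ 2) ≤ Real.log (2 * (L + 1) * N) :=
      Real.log_le_log (by positivity) hlb
    rw [Real.log_mul (ne_of_gt hCpos) (ne_of_gt hNpos)] at h1
    rw [e1, e2]
    linarith [e3 ▸ h1]
  · have h1 : Real.log N ≤ Real.log (2 * (L + 1) * M ^ 2) :=
      Real.log_le_log hNpos hub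
    rw [Real.log_mul (ne_of_gt hCpos) (by positivity)] at h1
    rw [e1, e2]
    linarith [e3 ▸ h1]

lemma dd_bound (n : ℕ) (p : ℂ × ℂ) :
    |dd n p| ≤ (2 : ℝ)⁻¹ ^ (n + 1) * Real.log (2 * (‖p.2‖ + 1)) := by
  set w := (fun z => z ^ 2 + p.2)^[n] p.1 with hw
  have hiter : (fun z => z ^ 2 + p.2)^[n + 1] p.1 = w ^ 2 + p.2 := by
    rw [Function.iterate_succ_apply']
  have : dd n p = (2 : ℝ)⁻¹ ^ (n + 1) *
      (logPlus (‖w ^ 2 + p.2‖) - 2 * logPlus (‖w‖)) := by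
    simp only [dd, gg, hiter]
    rw [pow_succ]
    ring
  rw [this, abs_mul, abs_of_nonneg (by positivity : (0:ℝ) ≤ (2:ℝ)⁻¹ ^ (n+1))]
  exact mul_le_mul_of_nonneg_left (key p.2 w) (by positivity)

lemma gg_cont (n : ℕ) : Continuous (gg n) := by
  have hlp : Continuous logPlus := by
    apply Continuous.log (continuous_id.max continuous_const)
    intro t
    exact ne_of_gt (lt_of_lt_of_le zero_lt_one (le_max_right _ _))
  have hiter : Continuous fun p : ℂ × ℂ => (fun z => z ^ 2 + p.2)^[n] p.1 := by
    induction n with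
    | zero => simpa using continuous_fst
    | succ k ih =>
      have : (fun p : ℂ × ℂ => (fun z => z ^ 2 + p.2)^[k + 1] p.1)
          = fun p : ℂ × ℂ => ((fun z => z ^ 2 + p.2)^[k] p.1) ^ 2 + p.2 := by
        funext p
        rw [Function.iterate_succ_apply']
      rw [this]
      exact (ih.pow 2).add continuous_snd
  exact continuous_const.mul (hlp.comp (continuous_norm.comp hiter))

lemma dd_summable (p : ℂ × ℂ) : Summable (fun n => dd n p) := by
  apply Summable.of_abs
  apply Summable.of_nonneg_of_le (fun n => abs_nonneg _) (fun n => dd_bound n p)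
  have : Summable (fun n : ℕ => (2:ℝ)⁻¹ ^ n * ((2:ℝ)⁻¹ * Real.log (2 * (‖p.2‖ + 1)))) :=
    (summable_geometric_of_lt_one (by norm_num) (by norm_num)).mul_right _
  convert this using 2 with n
  rw [pow_succ]; ring

noncomputable def GG (p : ℂ × ℂ) : ℝ := gg 0 p + ∑' n, dd n p

lemma unif (K : Set (ℂ × ℂ)) (hK : IsCompact K) :
    TendstoUniformlyOn gg GG atTop K := by
  obtain ⟨r, hr⟩ := hK.isBounded.subset_closedBall 0
  set R := max r 0 with hR
  have hKR : ∀ p ∈ K, ‖p.2‖ ≤ R := by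
    intro p hp
    have h1 : dist p 0 ≤ r := hr hp
    have h2 : ‖p.2‖ ≤ ‖p‖ := norm_snd_le p
    rw [dist_zero_right] at h1
    calc ‖p.2‖ = ‖p.2‖ := rfl
      _ ≤ ‖p‖ := h2
      _ ≤ r := h1
      _ ≤ R := le_max_left _ _
  have hR0 : (0 : ℝ) ≤ R := le_max_right _ _
  set C := Real.log (2 * (R + 1)) with hC
  have hC0 : (0 : ℝ) ≤ C := Real.log_nonneg (by nlinarith)
  have hbound : ∀ (n : ℕ), ∀ p ∈ K, ‖dd n p‖ ≤ (2:ℝ)⁻¹ ^ (n + 1) * C := by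
    intro n p hp
    refine le_trans (dd_bound n p) ?_
    apply mul_le_mul_of_nonneg_left _ (by positivity)
    apply Real.log_le_log (by positivity)
    have := hKR p hp
    nlinarith
  have hu : Summable (fun n : ℕ => (2:ℝ)⁻¹ ^ (n + 1) * C) := by
    have : Summable (fun n : ℕ => (2:ℝ)⁻¹ ^ n * ((2:ℝ)⁻¹ * C)) :=
      (summable_geometric_of_lt_one (by norm_num) (by norm_num)).mul_right _
    convert this using 2 with n
    rw [pow_succ]; ring
  have hsum : TendstoUniformlyOn (fun N p => ∑ n ∈ Finset.range N, dd n p)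
      (fun p => ∑' n, dd n p) atTop K := tendstoUniformlyOn_tsum_nat hu hbound
  have hconst : TendstoUniformlyOn (fun _ : ℕ => gg 0) (gg 0) atTop K := by
    rw [Metric.tendstoUniformlyOn_iff]
    intro ε hε
    filter_upwards with n p _
    simpa using hε
  have h2 := hconst.add hsum
  have hfun : (gg : ℕ → ℂ × ℂ → ℝ) = fun N p => gg 0 p + ∑ n ∈ Finset.range N, dd n p := by
    funext N p
    have h3 : ∑ n ∈ Finset.range N, dd n p = gg N p - gg 0 p :=
      Finset.sum_range_sub (fun n => gg n p) N
    rw [h3]; ring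
  rw [hfun]
  exact h2

theorem stmt1 :
    ∃ G : ℂ × ℂ → ℝ, Continuous G ∧
      ∀ K : Set (ℂ × ℂ), IsCompact K →
        TendstoUniformlyOn
          (fun (n : ℕ) (p : ℂ × ℂ) =>
            (2 : ℝ)⁻¹ ^ n * logPlus (‖(fun z => z ^ 2 + p.2)^[n] p.1‖))
          G Filter.atTop K := by
  refine ⟨GG, ?_, fun K hK => unif K hK⟩
  rw [continuous_iff_continuousAt]
  intro p
  have hball : IsCompact (closedBall p 1) := isCompact_closedBall p 1
  have hcont : ContinuousOn GG (closedBall p 1) := by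
    apply (unif _ hball).continuousOn
    refine Filter.Eventually.frequently ?_
    filter_upwards with n
    exact (gg_cont n).continuousOn
  exact hcont.continuousAt (closedBall_mem_nhds p one_pos)
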